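/- Let Y be a Hilbert space, ω₁,…,ω_q distinct real numbers, G₁ = diag(iω₁ I_Y,…,iω_q I_Y) on Z = Y^q, and G₂ = (G₂^k)_k ∈ L(U, Y^q) with each G₂^k ∈ L(U,Y) boundedly invertible. Fix n ∈ {1,…,q}. Then there exists c > 0 such that ‖(iω_n − G₁ + G₂G₂*)z‖ ≥ c‖z‖ for all z ∈ Z. -/

import Mathlib

set_option synthInstance.maxHeartbeats 800000
set_option maxHeartbeats 800000

noncomputable section

instance piLpCompleteSpace' (p : ENNReal) {ι : Type*} (Y : ι → Type*)
    [∀ i, UniformSpace (Y i)] [∀ i, CompleteSpace (Y i)] :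
    CompleteSpace (PiLp p Y) :=
  inferInstance

open Complex ContinuousLinearMap
open scoped ComplexInnerProductSpace

lemma stmt11_re_aux (c : ℝ) (w : ℂ) (hw : w.im = 0) :
    ((starRingEnd ℂ) (Complex.I * (c : ℂ)) * w).re = 0 := by
  simp [Complex.mul_re, Complex.mul_im, hw]

/-- quantitative lower bound `‖(iω_n − G₁ + G₂G₂*)z‖ ≥ c‖z‖` on
`Z = Y^q` for the diagonal operator `G₁ = diag(iω₁ I_Y,…,iω_q I_Y)` and
`G₂ = (G₂^k)_k` with boundedly invertible components. -/
theorem stmt11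
    {Y U : Type*} [NormedAddCommGroup Y] [InnerProductSpace ℂ Y] [CompleteSpace Y]
    [NormedAddCommGroup U] [InnerProductSpace ℂ U] [CompleteSpace U]
    (q : ℕ) (ω : Fin q → ℝ) (hω : Function.Injective ω)
    (G₁ : PiLp 2 (fun _ : Fin q => Y) →L[ℂ] PiLp 2 (fun _ : Fin q => Y))
    (hG₁ : ∀ z k, G₁ z k = (Complex.I * (ω k : ℂ)) • z k)
    (G₂k : Fin q → (U →L[ℂ] Y))
    (hinv : ∀ k, ∃ e : U ≃L[ℂ] Y, (e : U →L[ℂ] Y) = G₂k k)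
    (G₂ : U →L[ℂ] PiLp 2 (fun _ : Fin q => Y))
    (hG₂ : ∀ u k, G₂ u k = G₂k k u)
    (n : Fin q) :
    ∃ c > (0 : ℝ), ∀ z : PiLp 2 (fun _ : Fin q => Y),
      c * ‖z‖ ≤ ‖(Complex.I * (ω n : ℂ)) • z - G₁ z
        + G₂ ((ContinuousLinearMap.adjoint G₂) z)‖ := by
  classical
  obtain ⟨e, he⟩ := hinv n
  set A : U →L[ℂ] Y := ContinuousLinearMap.adjoint ((e.symm : Y →L[ℂ] U)) with hA
  -- the adjoint of `G₂k n` is bounded below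
  have hAe : ∀ y : Y, A (ContinuousLinearMap.adjoint (G₂k n) y) = y := by
    intro y
    have h1 : (G₂k n).comp (e.symm : Y →L[ℂ] U) = ContinuousLinearMap.id ℂ Y := by
      ext v
      simp [← he]
    have h2 := congrArg ContinuousLinearMap.adjoint h1
    rw [ContinuousLinearMap.adjoint_comp, ContinuousLinearMap.adjoint_id] at h2
    have := congrFun (congrArg (fun (f : Y →L[ℂ] Y) => (f : Y → Y)) h2) y
    simpa [hA] using this
  set m : ℝ := (‖A‖ + 1)⁻¹ with hm_def
  have hm : 0 < m := by
    rw [hm_def]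
    positivity
  have hmlow : ∀ y : Y, m * ‖y‖ ≤ ‖ContinuousLinearMap.adjoint (G₂k n) y‖ := by
    intro y
    have h1 : ‖y‖ ≤ (‖A‖ + 1) * ‖ContinuousLinearMap.adjoint (G₂k n) y‖ := by
      calc ‖y‖ = ‖A (ContinuousLinearMap.adjoint (G₂k n) y)‖ := by rw [hAe]
        _ ≤ ‖A‖ * ‖ContinuousLinearMap.adjoint (G₂k n) y‖ := A.le_opNorm _
        _ ≤ (‖A‖ + 1) * ‖ContinuousLinearMap.adjoint (G₂k n) y‖ := by
            apply mul_le_mul_of_nonneg_right (by linarith) (norm_nonneg _)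
    have hA1 : (0:ℝ) < ‖A‖ + 1 := by positivity
    rw [hm_def]
    rw [inv_mul_le_iff₀ hA1] at *
    · linarith
  -- the gap δ
  set s : Finset (Fin q) := Finset.univ.erase n with hs_def
  set δ : ℝ := if hs : s.Nonempty then s.inf' hs (fun k => |ω n - ω k|) else 1 with hδ_def
  have hδ : 0 < δ := by
    rw [hδ_def]
    split_ifs with hs
    · rw [Finset.lt_inf'_iff]
      intro k hk
      have hkn : k ≠ n := Finset.ne_of_mem_erase hk
      have : ω n ≠ ω k := fun h => hkn (hω h).symm
      rw [abs_pos, sub_ne_zero]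
      exact this
    · norm_num
  have hδle : ∀ k ∈ s, δ ≤ |ω n - ω k| := by
    intro k hk
    have hs : s.Nonempty := ⟨k, hk⟩
    rw [hδ_def, dif_pos hs]
    exact Finset.inf'_le _ hk
  -- constants
  set B : ℝ := ∑ k, ‖ContinuousLinearMap.adjoint (G₂k k)‖ with hB_def
  have hB : 0 ≤ B := Finset.sum_nonneg fun k _ => norm_nonneg _
  set K : ℝ := ((m + B) * (1 + ‖G₂‖) + δ) / (m * δ) with hK_def
  have hK : 0 < K := by
    rw [hK_def]
    apply div_pos
    · nlinarith [norm_nonneg G₂]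
    · positivity
  refine ⟨min ((2*K)⁻¹) ((4*K^2)⁻¹), by positivity, ?_⟩
  intro z
  set c : ℝ := min ((2*K)⁻¹) ((4*K^2)⁻¹) with hc_def
  have hc : 0 < c := by rw [hc_def]; positivity
  set w : PiLp 2 (fun _ : Fin q => Y) :=
    (Complex.I * (ω n : ℂ)) • z - G₁ z + G₂ ((ContinuousLinearMap.adjoint G₂) z) with hw_def
  set N : ℝ := ‖w‖ with hN_def
  set g : ℝ := ‖(ContinuousLinearMap.adjoint G₂) z‖ with hg_def
  set R : ℝ := ‖z‖ with hR_def
  have h0N : 0 ≤ N := norm_nonneg _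
  have h0g : 0 ≤ g := norm_nonneg _
  have h0R : 0 ≤ R := norm_nonneg _
  -- Step 1 : re ⟪w, z⟫ = g ^ 2
  have hre : (⟪w, z⟫).re = g ^ 2 := by
    have e1 : (⟪(Complex.I * (ω n : ℂ)) • z, z⟫).re = 0 := by
      rw [inner_smul_left]
      exact stmt11_re_aux (ω n) _ (inner_self_im (𝕜 := ℂ) z)
    have e2 : (⟪G₁ z, z⟫).re = 0 := by
      rw [PiLp.inner_apply, Complex.re_sum]
      apply Finset.sum_eq_zero
      intro k _
      rw [hG₁, inner_smul_left]
      exact stmt11_re_aux (ω k) _ (inner_self_im (𝕜 := ℂ) (z k))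
    have e3 : (⟪G₂ ((ContinuousLinearMap.adjoint G₂) z), z⟫).re = g ^ 2 := by
      have h1 : ⟪G₂ ((ContinuousLinearMap.adjoint G₂) z), z⟫
          = (starRingEnd ℂ) ⟪(ContinuousLinearMap.adjoint G₂) z,
              (ContinuousLinearMap.adjoint G₂) z⟫ := by
        calc ⟪G₂ ((ContinuousLinearMap.adjoint G₂) z), z⟫
            = (starRingEnd ℂ) ⟪z, G₂ ((ContinuousLinearMap.adjoint G₂) z)⟫ :=
              (inner_conj_symm _ _).symm
          _ = (starRingEnd ℂ) ⟪(ContinuousLinearMap.adjoint G₂) z,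
                (ContinuousLinearMap.adjoint G₂) z⟫ := by
              rw [ContinuousLinearMap.adjoint_inner_left]
      rw [h1, Complex.conj_re]
      simpa [hg_def] using inner_self_eq_norm_sq (𝕜 := ℂ) ((ContinuousLinearMap.adjoint G₂) z)
    rw [hw_def, inner_add_left, inner_sub_left]
    simp only [Complex.add_re, Complex.sub_re, e1, e2, e3]
    ring
  have hg2 : g ^ 2 ≤ N * R := by
    have := re_inner_le_norm (𝕜 := ℂ) w z
    rw [RCLike.re_to_complex, hre] at this
    exact this
  -- adjoint formula
  have hadj : (ContinuousLinearMap.adjoint G₂) z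
      = ∑ k, ContinuousLinearMap.adjoint (G₂k k) (z k) := by
    apply ext_inner_left ℂ
    intro v
    rw [inner_sum, ContinuousLinearMap.adjoint_inner_right, PiLp.inner_apply]
    exact Finset.sum_congr rfl fun k _ => by
      rw [hG₂, ← ContinuousLinearMap.adjoint_inner_right]
  -- tail norm
  set S1 : ℝ := ∑ k ∈ s, ‖z k‖ ^ 2 with hS1_def
  have hS1 : 0 ≤ S1 := Finset.sum_nonneg fun k _ => sq_nonneg _
  set P : ℝ := Real.sqrt S1 with hP_def
  have h0P : 0 ≤ P := Real.sqrt_nonneg _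
  have hP2 : P ^ 2 = S1 := Real.sq_sqrt hS1
  -- R ≤ P + ‖z n‖
  have hsum : S1 + ‖z n‖ ^ 2 = ∑ k, ‖z k‖ ^ 2 := by
    rw [hS1_def, hs_def]
    exact Finset.sum_erase_add _ _ (Finset.mem_univ n)
  have hRa : R ≤ P + ‖z n‖ := by
    have hRsq : R ^ 2 = S1 + ‖z n‖ ^ 2 := by
      rw [hR_def, PiLp.norm_sq_eq_of_L2, hsum]
    have : R ^ 2 ≤ (P + ‖z n‖) ^ 2 := by nlinarith [norm_nonneg (z n)]
    exact le_of_pow_le_pow_left₀ two_ne_zero (by positivity) this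
  -- each tail component is ≤ P
  have hzk : ∀ k ∈ s, ‖z k‖ ≤ P := by
    intro k hk
    have h1 : ‖z k‖ ^ 2 ≤ S1 :=
      Finset.single_le_sum (f := fun k => ‖z k‖ ^ 2) (fun i _ => sq_nonneg _) hk
    have := Real.sqrt_le_sqrt h1
    rwa [Real.sqrt_sq (norm_nonneg _)] at this
  -- δ P ≤ ‖D z‖
  have hDk : ∀ k, ‖((Complex.I * (ω n : ℂ)) • z - G₁ z) k‖ = |ω n - ω k| * ‖z k‖ := by
    intro k
    have h1 : ((Complex.I * (ω n : ℂ)) • z - G₁ z) k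
        = (Complex.I * (((ω n : ℝ) - ω k : ℝ) : ℂ)) • z k := by
      rw [PiLp.sub_apply, PiLp.smul_apply, hG₁, ← sub_smul]
      congr 1
      push_cast
      ring
    rw [h1, norm_smul]
    congr 1
    rw [norm_mul, Complex.norm_I, one_mul, Complex.norm_real, Real.norm_eq_abs]
  have hDP : δ * P ≤ ‖(Complex.I * (ω n : ℂ)) • z - G₁ z‖ := by
    have hsq : (δ * P) ^ 2 ≤ ‖(Complex.I * (ω n : ℂ)) • z - G₁ z‖ ^ 2 := by
      rw [PiLp.norm_sq_eq_of_L2]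
      calc (δ * P) ^ 2 = δ ^ 2 * S1 := by rw [mul_pow, hP2]
        _ = ∑ k ∈ s, δ ^ 2 * ‖z k‖ ^ 2 := by rw [hS1_def, Finset.mul_sum]
        _ ≤ ∑ k ∈ s, (|ω n - ω k| * ‖z k‖) ^ 2 := by
            apply Finset.sum_le_sum
            intro k hk
            rw [mul_pow]
            exact mul_le_mul_of_nonneg_right
              (pow_le_pow_left₀ hδ.le (hδle k hk) 2) (sq_nonneg _)
        _ ≤ ∑ k, (|ω n - ω k| * ‖z k‖) ^ 2 := by
            apply Finset.sum_le_sum_of_subset_of_nonneg (Finset.erase_subset _ _)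
            intro k _ _
            positivity
        _ = ∑ k, ‖((Complex.I * (ω n : ℂ)) • z - G₁ z) k‖ ^ 2 := by
            exact Finset.sum_congr rfl fun k _ => by rw [hDk]
    exact le_of_pow_le_pow_left₀ two_ne_zero (norm_nonneg _) hsq
  -- ‖D z‖ ≤ N + ‖G₂‖ g
  have hDN : ‖(Complex.I * (ω n : ℂ)) • z - G₁ z‖ ≤ N + ‖G₂‖ * g := by
    have h1 : (Complex.I * (ω n : ℂ)) • z - G₁ z
        = w - G₂ ((ContinuousLinearMap.adjoint G₂) z) := by
      rw [hw_def]; abel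
    rw [h1]
    calc ‖w - G₂ ((ContinuousLinearMap.adjoint G₂) z)‖
        ≤ ‖w‖ + ‖G₂ ((ContinuousLinearMap.adjoint G₂) z)‖ := norm_sub_le _ _
      _ ≤ N + ‖G₂‖ * g := add_le_add le_rfl (G₂.le_opNorm _)
  have hP' : δ * P ≤ N + ‖G₂‖ * g := hDP.trans hDN
  -- m ‖z n‖ ≤ g + B P
  have hzn : m * ‖z n‖ ≤ g + B * P := by
    have h1 : ContinuousLinearMap.adjoint (G₂k n) (z n)
        = (ContinuousLinearMap.adjoint G₂) z
          - ∑ k ∈ s, ContinuousLinearMap.adjoint (G₂k k) (z k) := by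
      rw [hadj, hs_def, eq_sub_iff_add_eq]
      exact Finset.add_sum_erase _
        (fun k => ContinuousLinearMap.adjoint (G₂k k) (z k)) (Finset.mem_univ n)
    have h2 : ‖ContinuousLinearMap.adjoint (G₂k n) (z n)‖ ≤ g + B * P := by
      rw [h1]
      calc ‖(ContinuousLinearMap.adjoint G₂) z
            - ∑ k ∈ s, ContinuousLinearMap.adjoint (G₂k k) (z k)‖
          ≤ g + ‖∑ k ∈ s, ContinuousLinearMap.adjoint (G₂k k) (z k)‖ := norm_sub_le _ _
        _ ≤ g + ∑ k ∈ s, ‖ContinuousLinearMap.adjoint (G₂k k) (z k)‖ := by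
            gcongr
            exact norm_sum_le _ _
        _ ≤ g + ∑ k ∈ s, ‖ContinuousLinearMap.adjoint (G₂k k)‖ * P := by
            gcongr with k hk
            calc ‖ContinuousLinearMap.adjoint (G₂k k) (z k)‖
                ≤ ‖ContinuousLinearMap.adjoint (G₂k k)‖ * ‖z k‖ :=
                  (ContinuousLinearMap.adjoint (G₂k k)).le_opNorm _
              _ ≤ ‖ContinuousLinearMap.adjoint (G₂k k)‖ * P := by
                  exact mul_le_mul_of_nonneg_left (hzk k hk) (norm_nonneg _)
        _ ≤ g + B * P := by
            rw [← Finset.sum_mul]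
            gcongr
            · rw [hB_def]
              exact Finset.sum_le_sum_of_subset_of_nonneg (Finset.erase_subset _ _)
                fun k _ _ => norm_nonneg _
    exact (hmlow (z n)).trans h2
  -- combine : m δ R ≤ (m + B)(N + ‖G₂‖ g) + δ g
  have hstar : m * δ * R ≤ (m + B) * (N + ‖G₂‖ * g) + δ * g := by
    have t1 := mul_le_mul_of_nonneg_left hP' hm.le
    have t2 := mul_le_mul_of_nonneg_left hzn hδ.le
    have t3 := mul_le_mul_of_nonneg_left hP' hB
    have t4 := mul_le_mul_of_nonneg_left hRa (mul_nonneg hm.le hδ.le)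
    linarith [t1, t2, t3, t4]
  have hRK : R ≤ K * (N + g) := by
    rw [hK_def, div_mul_eq_mul_div, le_div_iff₀ (by positivity)]
    have u1 : 0 ≤ m * g := mul_nonneg hm.le h0g
    have u2 : 0 ≤ B * g := mul_nonneg hB h0g
    have u3 : 0 ≤ m * (‖G₂‖ * N) := mul_nonneg hm.le (mul_nonneg (norm_nonneg G₂) h0N)
    have u4 : 0 ≤ B * (‖G₂‖ * N) := mul_nonneg hB (mul_nonneg (norm_nonneg G₂) h0N)
    have u5 : 0 ≤ δ * N := mul_nonneg hδ.le h0N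
    linarith [hstar, u1, u2, u3, u4, u5]

  -- final contradiction argument
  by_contra hcon
  push_neg at hcon
  have hcon' : N < c * R := hcon
  have hR0 : 0 < R := by
    rcases h0R.lt_or_eq with h | h
    · exact h
    · exfalso; rw [← h, mul_zero] at hcon'; exact absurd hcon' (not_lt.mpr h0N)
  have hcK1 : c ≤ (2*K)⁻¹ := min_le_left _ _
  have hcK2 : c ≤ (4*K^2)⁻¹ := min_le_right _ _
  have h2KN : 2*K*N < R := by
    have h1 : N < (2*K)⁻¹ * R :=
      lt_of_lt_of_le hcon' (mul_le_mul_of_nonneg_right hcK1 hR0.le)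
    have h2 := (mul_lt_mul_iff_right₀ (by positivity : (0:ℝ) < 2*K)).mpr h1
    rwa [← mul_assoc, mul_inv_cancel₀ (by positivity), one_mul] at h2
  have h2Kg : 2*K*g < R := by
    have hg2' : g ^ 2 < (4*K^2)⁻¹ * (R * R) := by
      calc g ^ 2 ≤ N * R := hg2
        _ < (c * R) * R := mul_lt_mul_of_pos_right hcon' hR0
        _ ≤ ((4*K^2)⁻¹ * R) * R :=
            mul_le_mul_of_nonneg_right
              (mul_le_mul_of_nonneg_right hcK2 hR0.le) hR0.le
        _ = (4*K^2)⁻¹ * (R * R) := by ring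
    have hsq : (2*K*g) ^ 2 < R ^ 2 := by
      have h4 : (0:ℝ) < 4*K^2 := by positivity
      calc (2*K*g) ^ 2 = 4*K^2 * g ^ 2 := by ring
        _ < 4*K^2 * ((4*K^2)⁻¹ * (R * R)) := (mul_lt_mul_iff_right₀ h4).mpr hg2'
        _ = R ^ 2 := by field_simp
    exact lt_of_pow_lt_pow_left₀ 2 hR0.le hsq
  have hRK' : R ≤ K*N + K*g := by rw [mul_add] at hRK; exact hRK
  linarith

end
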